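/- Let D be a finite nonempty type and let B be a compact convex set of functions ψ' : D → ℝ such that every ψ' ∈ B is nonnegative and has positive total sum ∑_{d ∈ D} ψ'(d) > 0. Then 𝒩(B) equals the convex hull of 𝒩(ext(B)), where ext(B) denotes the set of extreme points of B and 𝒩 is the normalization operator 𝒩(S) = { ψ' / (∑_{d ∈ D} ψ'(d)) : ψ' ∈ S }. -/

import Mathlib

open Set Module Pointwise

section Minkowski

variable {E : Type*} [NormedAddCommGroup E] [NormedSpace ℝ E] [FiniteDimensional ℝ E]

lemma exists_face_of_endpoint {s : Set E} (hs : IsCompact s) (hconv : Convex ℝ s)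
    {y v : E} (hy : y ∈ s) (hv : v ∈ vectorSpan ℝ s) (hvne : v ≠ 0)
    (hout : ∀ t : ℝ, 0 < t → y + t • v ∉ s) :
    ∃ F : Set E, IsCompact F ∧ Convex ℝ F ∧ IsExtreme ℝ s F ∧ y ∈ F ∧
      finrank ℝ (vectorSpan ℝ F) < finrank ℝ (vectorSpan ℝ s) := by
  classical
  set W : Submodule ℝ E := vectorSpan ℝ s with hW
  obtain ⟨U, hU⟩ := Submodule.exists_isCompl W
  set D : Set E := (U : Set E) ∩ Metric.closedBall 0 1 with hD
  have hDconv : Convex ℝ D := (U.convex).inter (convex_closedBall 0 1)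
  have hDcomp : IsCompact D :=
    ((isCompact_closedBall (0:E) 1).inter_left (Submodule.closed_of_finiteDimensional U))
  have h0D : (0:E) ∈ D := ⟨U.zero_mem, Metric.mem_closedBall_self zero_le_one⟩
  set C : Set E := s + D with hC
  have hCconv : Convex ℝ C := hconv.add hDconv
  have hCcomp : IsCompact C := hs.add hDcomp
  have hsC : s ⊆ C := fun p hp => ⟨p, hp, 0, h0D, by simp⟩
  have hyC : y ∈ C := hsC hy
  have hsub_mem_W : ∀ p ∈ s, ∀ q ∈ s, p - q ∈ W := by
    intro p hp q hq
    simpa [vsub_eq_sub] using vsub_mem_vectorSpan ℝ hp hq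
  -- moving from y in direction v exits C as well
  have hyoutC : ∀ t : ℝ, 0 < t → y + t • v ∉ C := by
    intro t ht hmem
    obtain ⟨p, hp, u, hu, hpu⟩ := hmem
    have huW : u ∈ W := by
      have h1 : u = (y - p) + t • v := by
        have := hpu.symm
        rw [eq_comm] at hpu
        linear_combination (norm := module) hpu.symm
      rw [h1]
      exact W.add_mem (hsub_mem_W y hy p hp) (W.smul_mem t hv)
    have hu0 : u = 0 := by
      have hdisj := hU.disjoint
      rw [Submodule.disjoint_def] at hdisj
      exact hdisj u huW hu.1
    refine hout t ht ?_
    simp only [hu0, add_zero] at hpu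
    rw [← hpu]; exact hp
  -- the interior of C is nonempty
  have hspan : affineSpan ℝ C = ⊤ := by
    have hvs : vectorSpan ℝ C = ⊤ := by
      rw [eq_top_iff, ← hU.sup_eq_top]
      refine sup_le ?_ ?_
      · rw [hW]
        exact vectorSpan_mono ℝ hsC
      · intro u hu
        rcases eq_or_ne u 0 with rfl | hu0
        · exact Submodule.zero_mem _
        · have hnorm : (0:ℝ) < ‖u‖ := norm_pos_iff.2 hu0
          have h1 : ‖u‖⁻¹ • u ∈ D := by
            refine ⟨U.smul_mem _ hu, ?_⟩
            simp [Metric.mem_closedBall, norm_smul, abs_of_nonneg (inv_nonneg.2 hnorm.le),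
              inv_mul_cancel₀ hnorm.ne']
          have h2 : y + ‖u‖⁻¹ • u ∈ C := ⟨y, hy, _, h1, rfl⟩
          have h3 : (y + ‖u‖⁻¹ • u) - y ∈ vectorSpan ℝ C := by
            simpa [vsub_eq_sub] using vsub_mem_vectorSpan ℝ h2 (hsC hy)
          have h4 : ‖u‖⁻¹ • u ∈ vectorSpan ℝ C := by simpa using h3
          have := (vectorSpan ℝ C).smul_mem ‖u‖ h4
          rwa [smul_smul, mul_inv_cancel₀ hnorm.ne', one_smul] at this
    have hne : C.Nonempty := ⟨y, hyC⟩
    rw [AffineSubspace.affineSpan_eq_top_iff_vectorSpan_eq_top_of_nonempty ℝ E E hne]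
    exact hvs
  have hint : (interior C).Nonempty := by
    rw [hCconv.interior_nonempty_iff_affineSpan_eq_top]
    exact hspan
  -- y is not in the interior of C
  have hynotint : y ∉ interior C := by
    intro hyint
    rw [mem_interior_iff_mem_nhds, Metric.mem_nhds_iff] at hyint
    obtain ⟨ε, hε, hball⟩ := hyint
    have hvnorm : (0:ℝ) < ‖v‖ := norm_pos_iff.2 hvne
    set t : ℝ := ε / (2 * ‖v‖) with ht
    have htpos : 0 < t := by positivity
    have heq : t * ‖v‖ = ε / 2 := by
      rw [ht]; field_simp
    have : y + t • v ∈ Metric.ball y ε := by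
      simp only [Metric.mem_ball, dist_self_add_left, norm_smul, Real.norm_eq_abs,
        abs_of_pos htpos]
      linarith
    exact hyoutC t htpos (hball this)
  -- separating functional
  obtain ⟨l, hl⟩ := geometric_hahn_banach_open_point hCconv.interior isOpen_interior hynotint
  obtain ⟨q, hq⟩ := hint
  -- l ≤ l y on C
  have hle : ∀ p ∈ C, l p ≤ l y := by
    intro p hp
    by_contra hgt
    push_neg at hgt
    set c : ℝ := l q - l p with hc
    set t : ℝ := min 1 ((l p - l y) / (2 * (|c| + 1))) with htdef
    have htpos : 0 < t := lt_min one_pos (div_pos (by linarith) (by positivity))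
    have htle : t ≤ 1 := min_le_left _ _
    have hmem : p + t • (q - p) ∈ interior C :=
      hCconv.add_smul_sub_mem_interior hp hq ⟨htpos, htle⟩
    have hlt := hl _ hmem
    rw [map_add, map_smul] at hlt
    have h1 : t * |c| ≤ (l p - l y) / 2 := by
      have h2 : t ≤ (l p - l y) / (2 * (|c| + 1)) := min_le_right _ _
      have h3 : t * |c| ≤ (l p - l y) / (2 * (|c| + 1)) * |c| :=
        mul_le_mul_of_nonneg_right h2 (abs_nonneg c)
      have h4 : (l p - l y) / (2 * (|c| + 1)) * |c| ≤ (l p - l y) / 2 := by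
        rw [div_mul_eq_mul_div, div_le_div_iff₀ (by positivity) two_pos]
        nlinarith [abs_nonneg c]
      linarith
    have h5 : t * (l (q - p)) ≥ -(t * |c|) := by
      have : l (q - p) = c := by rw [hc, map_sub]
      rw [this]
      have := neg_abs_le c
      nlinarith
    simp only [smul_eq_mul] at hlt
    nlinarith
  -- there is a point of s where l is strictly smaller
  have hexlt : ∃ p ∈ s, l p < l y := by
    by_contra hno
    push_neg at hno
    have hconst : ∀ p ∈ s, l p = l y := fun p hp => le_antisymm (hle p (hsC hp)) (hno p hp)
    have hlW : ∀ w ∈ W, l w = 0 := by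
      intro w hw
      rw [hW] at hw
      rw [vectorSpan_def] at hw
      induction hw using Submodule.span_induction with
      | mem x hx =>
        obtain ⟨p, hp, p', hp', rfl⟩ := hx
        beta_reduce
        rw [vsub_eq_sub, map_sub, hconst p hp, hconst p' hp', sub_self]
      | zero => simp
      | add x y _ _ hx hy => rw [map_add, hx, hy, add_zero]
      | smul c x _ hx => rw [map_smul, hx, smul_zero]
    have hlU : ∀ u ∈ U, l u = 0 := by
      have hlD : ∀ u ∈ D, l u ≤ 0 := by
        intro u hu
        have : y + u ∈ C := ⟨y, hy, u, hu, rfl⟩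
        have := hle _ this
        rw [map_add] at this
        linarith
      intro u hu
      rcases eq_or_ne u 0 with rfl | hu0
      · simp
      · have hnorm : (0:ℝ) < ‖u‖ := norm_pos_iff.2 hu0
        have h1 : ‖u‖⁻¹ • u ∈ D := by
          refine ⟨U.smul_mem _ hu, ?_⟩
          simp [Metric.mem_closedBall, norm_smul, abs_of_nonneg (inv_nonneg.2 hnorm.le),
            inv_mul_cancel₀ hnorm.ne']
        have h2 : -(‖u‖⁻¹ • u) ∈ D := by
          refine ⟨U.neg_mem h1.1, ?_⟩
          simpa using h1.2
        have h3 := hlD _ h1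
        have h4 := hlD _ h2
        rw [map_neg] at h4
        have h5 : l (‖u‖⁻¹ • u) = 0 := le_antisymm h3 (by linarith)
        rw [map_smul, smul_eq_mul] at h5
        have := inv_ne_zero hnorm.ne'
        rcases mul_eq_zero.1 h5 with h | h
        · exact absurd h this
        · exact h
    have hl0 : l = 0 := by
      ext x
      have hx : x ∈ W ⊔ U := by rw [hU.sup_eq_top]; trivial
      obtain ⟨w, hw, u, hu, rfl⟩ := Submodule.mem_sup.1 hx
      rw [map_add, hlW w hw, hlU u hu]
      simp
    have := hl q hq
    rw [hl0] at this
    simp at this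
  obtain ⟨p₀, hp₀, hp₀lt⟩ := hexlt
  -- the exposed face
  set F : Set E := {p ∈ s | ∀ r ∈ s, l r ≤ l p} with hF
  have hFexp : IsExposed ℝ s F := fun _ => ⟨l, rfl⟩
  have hyF : y ∈ F := ⟨hy, fun r hr => hle r (hsC hr)⟩
  have hFcomp : IsCompact F := hFexp.isCompact hs
  have hFconv : Convex ℝ F := hFexp.convex hconv
  have hFext : IsExtreme ℝ s F := hFexp.isExtreme
  refine ⟨F, hFcomp, hFconv, hFext, hyF, ?_⟩
  -- dimension drop
  have hFW : vectorSpan ℝ F ≤ W ⊓ LinearMap.ker (l : E →ₗ[ℝ] ℝ) := by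
    rw [vectorSpan_def, Submodule.span_le]
    rintro x ⟨p, hp, p', hp', rfl⟩
    beta_reduce
    rw [vsub_eq_sub]
    show p - p' ∈ (W ⊓ LinearMap.ker (l : E →ₗ[ℝ] ℝ) : Submodule ℝ E)
    refine Submodule.mem_inf.2 ⟨hsub_mem_W p hp.1 p' hp'.1, ?_⟩
    rw [LinearMap.mem_ker]
    have h1 : l p ≤ l p' := hp'.2 p hp.1
    have h2 : l p' ≤ l p := hp.2 p' hp'.1
    have : l p = l p' := le_antisymm h1 h2
    simp only [ContinuousLinearMap.coe_coe, map_sub]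
    rw [this, sub_self]
  have hlt : W ⊓ LinearMap.ker (l : E →ₗ[ℝ] ℝ) < W := by
    refine lt_of_le_of_ne inf_le_left ?_
    intro heq
    have hyp₀ : y - p₀ ∈ W := hsub_mem_W y hy p₀ hp₀
    rw [← heq] at hyp₀
    have := (Submodule.mem_inf.1 hyp₀).2
    rw [LinearMap.mem_ker] at this
    simp only [ContinuousLinearMap.coe_coe, map_sub] at this
    have : l y = l p₀ := by linarith [sub_eq_zero.1 this]
    linarith
  calc finrank ℝ (vectorSpan ℝ F) ≤ finrank ℝ (W ⊓ LinearMap.ker (l : E →ₗ[ℝ] ℝ) : Submodule ℝ E) :=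
        Submodule.finrank_mono hFW
    _ < finrank ℝ W := Submodule.finrank_lt_finrank_of_lt hlt


/-- **Minkowski–Carathéodory**: a compact convex set in a finite-dimensional normed space
is the convex hull of its extreme points (inclusion). -/
lemma subset_convexHull_extremePoints_aux :
    ∀ (n : ℕ) (s : Set E), IsCompact s → Convex ℝ s →
      finrank ℝ (vectorSpan ℝ s) ≤ n → s ⊆ convexHull ℝ (s.extremePoints ℝ) := by
  intro n
  induction n using Nat.strong_induction_on with
  | _ n IH =>
    intro s hs hconv hrank x hx
    by_cases hxe : x ∈ s.extremePoints ℝ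
    · exact subset_convexHull ℝ _ hxe
    · -- x is a proper convex combination
      rw [mem_extremePoints] at hxe
      push_neg at hxe
      obtain ⟨x₁, hx₁, x₂, hx₂, hseg, hne⟩ := hxe hx
      have hx₁₂ : x₁ ≠ x₂ := by
        rintro rfl
        rw [openSegment_same] at hseg
        have h := Set.mem_singleton_iff.1 hseg
        exact hne h.symm h.symm
      set v : E := x₂ - x₁ with hv
      have hvne : v ≠ 0 := sub_ne_zero.2 (Ne.symm hx₁₂)
      have hvW : v ∈ vectorSpan ℝ s := by
        simpa [vsub_eq_sub] using vsub_mem_vectorSpan ℝ hx₂ hx₁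
      obtain ⟨a, b, ha, hb, hab, hcomb⟩ := hseg
      -- the set of times t with x + t • v ∈ s
      set T : Set ℝ := {t : ℝ | x + t • v ∈ s} with hT
      have hTclosed : IsClosed T := by
        have hcont : Continuous fun t : ℝ => x + t • v :=
          continuous_const.add (continuous_id.smul continuous_const)
        exact hs.isClosed.preimage hcont
      obtain ⟨R, hR⟩ := hs.isBounded.subset_closedBall x
      have hvnorm : (0 : ℝ) < ‖v‖ := norm_pos_iff.2 hvne
      have hTsub : T ⊆ Set.Icc (-(R / ‖v‖)) (R / ‖v‖) := by
        intro t ht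
        have h1 : dist (x + t • v) x ≤ R := hR ht
        rw [dist_self_add_left, norm_smul, Real.norm_eq_abs] at h1
        have h2 : |t| ≤ R / ‖v‖ := by
          rw [le_div_iff₀ hvnorm]; exact h1
        exact abs_le.1 h2
      have hTcomp : IsCompact T := isCompact_Icc.of_isClosed_subset hTclosed hTsub
      -- membership of the segment times
      have hmemT : ∀ t : ℝ, -b ≤ t → t ≤ a → t ∈ T := by
        intro t ht1 ht2
        have : x + t • v = (a - t) • x₁ + (b + t) • x₂ := by
          rw [← hcomb, hv]
          module
        rw [hT, Set.mem_setOf_eq, this]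
        have := hconv hx₁ hx₂ (by linarith : (0:ℝ) ≤ a - t) (by linarith : (0:ℝ) ≤ b + t)
          (by linarith)
        exact this
      have hTne : T.Nonempty := ⟨0, hmemT 0 (by linarith) ha.le⟩
      set tmax : ℝ := sSup T with htmax
      set tmin : ℝ := sInf T with htmin
      have htmaxT : tmax ∈ T := hTcomp.sSup_mem hTne
      have htminT : tmin ∈ T := hTcomp.sInf_mem hTne
      have hamax : a ≤ tmax := le_csSup hTcomp.bddAbove (hmemT a (by linarith) le_rfl)
      have hbmin : tmin ≤ -b := csInf_le hTcomp.bddBelow (hmemT (-b) le_rfl (by linarith))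
      set y : E := x + tmax • v with hy
      set z : E := x + tmin • v with hz
      have hys : y ∈ s := htmaxT
      have hzs : z ∈ s := htminT
      -- key step: a non-extendable point is in the hull of extreme points
      have key : ∀ p ∈ s, ∀ w ∈ vectorSpan ℝ s, w ≠ 0 →
          (∀ t : ℝ, 0 < t → p + t • w ∉ s) → p ∈ convexHull ℝ (s.extremePoints ℝ) := by
        intro p hp w hw hwne hpout
        obtain ⟨F, hFcomp, hFconv, hFext, hpF, hFrank⟩ :=
          exists_face_of_endpoint hs hconv hp hw hwne hpout
        have hFn : finrank ℝ (vectorSpan ℝ F) < n := lt_of_lt_of_le hFrank hrank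
        have hsubF : F ⊆ convexHull ℝ (F.extremePoints ℝ) :=
          IH _ hFn F hFcomp hFconv le_rfl
        have := hsubF hpF
        exact convexHull_mono (hFext.extremePoints_subset_extremePoints) this
      have hyh : y ∈ convexHull ℝ (s.extremePoints ℝ) := by
        refine key y hys v hvW hvne ?_
        intro t ht hmem
        have : tmax + t ∈ T := by
          rw [hT, Set.mem_setOf_eq]
          have : y + t • v = x + (tmax + t) • v := by rw [hy]; module
          rwa [this] at hmem
        have := le_csSup hTcomp.bddAbove this
        linarith
      have hzh : z ∈ convexHull ℝ (s.extremePoints ℝ) := by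
        refine key z hzs (-v) (Submodule.neg_mem _ hvW) (neg_ne_zero.2 hvne) ?_
        intro t ht hmem
        have : tmin - t ∈ T := by
          rw [hT, Set.mem_setOf_eq]
          have : z + t • (-v) = x + (tmin - t) • v := by rw [hz]; module
          rwa [this] at hmem
        have := csInf_le hTcomp.bddBelow this
        linarith
      -- x is on the segment between y and z
      have hxyz : x ∈ segment ℝ y z := by
        have hd : (0:ℝ) < tmax - tmin := by linarith
        refine ⟨(-tmin) / (tmax - tmin), tmax / (tmax - tmin), ?_, ?_, ?_, ?_⟩
        · exact div_nonneg (by linarith) hd.le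
        · exact div_nonneg (by linarith) hd.le
        · rw [← add_div, div_eq_one_iff_eq hd.ne']
          ring
        · rw [hy, hz]
          match_scalars <;> field_simp <;> ring
      exact (convex_convexHull ℝ _).segment_subset hyh hzh hxyz

end Minkowski

/-- The normalization operator: each function in `S` is divided by its total sum. -/
noncomputable def normSet {D : Type*} [Fintype D] (S : Set (D → ℝ)) : Set (D → ℝ) :=
  {g | ∃ ψ' ∈ S, g = (∑ d, ψ' d)⁻¹ • ψ'}

section NormCore

variable {D : Type*} [Fintype D]

lemma sum_combo_apply (ψ₁ ψ₂ : D → ℝ) (a b : ℝ) :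
    ∑ d, (a • ψ₁ + b • ψ₂) d = a * ∑ d, ψ₁ d + b * ∑ d, ψ₂ d := by
  simp [Finset.sum_add_distrib, Finset.mul_sum]

lemma combo_den_pos {s₁ s₂ : ℝ} (hs₁ : 0 < s₁) (hs₂ : 0 < s₂)
    {a b : ℝ} (ha : 0 ≤ a) (hb : 0 ≤ b) (hab : a + b = 1) :
    0 < a * s₁ + b * s₂ := by
  rcases ha.lt_or_eq with h | h
  · nlinarith
  · have hb1 : b = 1 := by linarith
    rw [← h, hb1]; linarith

lemma norm_combo (ψ₁ ψ₂ : D → ℝ) (hs₁ : 0 < ∑ d, ψ₁ d) (hs₂ : 0 < ∑ d, ψ₂ d)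
    {a b : ℝ} (ha : 0 ≤ a) (hb : 0 ≤ b) (hab : a + b = 1) :
    (∑ d, (a • ψ₁ + b • ψ₂) d)⁻¹ • (a • ψ₁ + b • ψ₂) =
      (a * (∑ d, ψ₁ d) / (a * (∑ d, ψ₁ d) + b * (∑ d, ψ₂ d))) • ((∑ d, ψ₁ d)⁻¹ • ψ₁)
      + (b * (∑ d, ψ₂ d) / (a * (∑ d, ψ₁ d) + b * (∑ d, ψ₂ d))) • ((∑ d, ψ₂ d)⁻¹ • ψ₂) := by
  have hden := combo_den_pos hs₁ hs₂ ha hb hab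
  rw [sum_combo_apply]
  funext d
  simp only [Pi.smul_apply, Pi.add_apply, smul_eq_mul]
  field_simp

lemma normSet_convex {B : Set (D → ℝ)} (hB : Convex ℝ B)
    (hsum : ∀ ψ' ∈ B, 0 < ∑ d, ψ' d) : Convex ℝ (normSet B) := by
  rintro g₁ ⟨ψ₁, hψ₁, rfl⟩ g₂ ⟨ψ₂, hψ₂, rfl⟩ a b ha hb hab
  have hs₁ := hsum ψ₁ hψ₁
  have hs₂ := hsum ψ₂ hψ₂
  set s₁ : ℝ := ∑ d, ψ₁ d with hs₁def
  set s₂ : ℝ := ∑ d, ψ₂ d with hs₂def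
  have hden : 0 < a * s₂ + b * s₁ := combo_den_pos hs₂ hs₁ ha hb hab
  set lam : ℝ := a * s₂ / (a * s₂ + b * s₁) with hlam
  have hlam0 : 0 ≤ lam := div_nonneg (mul_nonneg ha hs₂.le) hden.le
  have hlam1' : 1 - lam = b * s₁ / (a * s₂ + b * s₁) := by
    rw [hlam]
    field_simp
    ring
  have hlam1 : 0 ≤ 1 - lam := by
    rw [hlam1']
    exact div_nonneg (mul_nonneg hb hs₁.le) hden.le
  refine ⟨lam • ψ₁ + (1 - lam) • ψ₂, hB hψ₁ hψ₂ hlam0 hlam1 (by ring), ?_⟩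
  rw [norm_combo ψ₁ ψ₂ hs₁ hs₂ hlam0 hlam1 (by ring)]
  have hpos2 : 0 < lam * s₁ + (1 - lam) * s₂ := combo_den_pos hs₁ hs₂ hlam0 hlam1 (by ring)
  obtain rfl : b = 1 - a := by linarith
  have hkey1 : lam * s₁ / (lam * s₁ + (1 - lam) * s₂) = a := by
    rw [div_eq_iff hpos2.ne', hlam1', hlam]
    field_simp
    ring
  have hkey2 : (1 - lam) * s₂ / (lam * s₁ + (1 - lam) * s₂) = 1 - a := by
    rw [div_eq_iff hpos2.ne', hlam1', hlam]
    field_simp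
    ring
  rw [hkey1, hkey2]

end NormCore

/-- For a compact convex set `B` of nonnegative functions with positive total sums,
`𝒩(B)` is the convex hull of `𝒩(ext(B))`. -/
theorem normSet_eq_convexHull_normSet_extremePoints
    (D : Type*) [Fintype D] [Nonempty D]
    (B : Set (D → ℝ)) (hB : Convex ℝ B) (hBcomp : IsCompact B)
    (hnonneg : ∀ ψ' ∈ B, ∀ d, 0 ≤ ψ' d)
    (hsum : ∀ ψ' ∈ B, 0 < ∑ d, ψ' d) :
    normSet B = convexHull ℝ (normSet (Set.extremePoints ℝ B)) := by
  apply Set.Subset.antisymm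
  · -- `normSet B ⊆ convexHull (normSet (ext B))`
    have hMink : B ⊆ convexHull ℝ (Set.extremePoints ℝ B) :=
      subset_convexHull_extremePoints_aux (Module.finrank ℝ (vectorSpan ℝ B)) B hBcomp hB le_rfl
    set H : Set (D → ℝ) := convexHull ℝ (normSet (Set.extremePoints ℝ B)) with hH
    set C : Set (D → ℝ) := {ψ ∈ B | (∑ d, ψ d)⁻¹ • ψ ∈ H} with hCdef
    have hCconv : Convex ℝ C := by
      rintro ψ₁ ⟨hψ₁B, hψ₁H⟩ ψ₂ ⟨hψ₂B, hψ₂H⟩ a b ha hb hab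
      refine ⟨hB hψ₁B hψ₂B ha hb hab, ?_⟩
      have hs₁ := hsum ψ₁ hψ₁B
      have hs₂ := hsum ψ₂ hψ₂B
      have hden := combo_den_pos hs₁ hs₂ ha hb hab
      rw [norm_combo ψ₁ ψ₂ hs₁ hs₂ ha hb hab]
      exact (convex_convexHull ℝ _) hψ₁H hψ₂H
        (div_nonneg (mul_nonneg ha hs₁.le) hden.le)
        (div_nonneg (mul_nonneg hb hs₂.le) hden.le)
        (by rw [← add_div, div_self hden.ne'])
    have hextC : Set.extremePoints ℝ B ⊆ C := by
      intro ψ hψ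
      exact ⟨extremePoints_subset hψ,
        subset_convexHull ℝ _ ⟨ψ, hψ, rfl⟩⟩
    have hBC : B ⊆ C := fun ψ hψ => (convexHull_min hextC hCconv) (hMink hψ)
    rintro g ⟨ψ, hψ, rfl⟩
    exact (hBC hψ).2
  · -- `convexHull (normSet (ext B)) ⊆ normSet B`
    refine convexHull_min ?_ (normSet_convex hB hsum)
    rintro g ⟨ψ, hψ, rfl⟩
    exact ⟨ψ, extremePoints_subset hψ, rfl⟩
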